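/- If T is a nontrivial tree of order n with l leaves and s support vertices, then γ²ᵈ(T) ≤ (n + 3s − l)/4. -/

import Mathlib

open SimpleGraph

/-- A disjunctive dominating set: every vertex not in `D` has a neighbor in `D`
or at least two vertices of `D` at distance exactly `2`. -/
def IsDisjDomSet {V : Type*} (G : SimpleGraph V) (D : Set V) : Prop :=
  ∀ v ∉ D, (∃ u ∈ D, G.Adj v u) ∨
    (∃ w₁ ∈ D, ∃ w₂ ∈ D, w₁ ≠ w₂ ∧ G.dist v w₁ = 2 ∧ G.dist v w₂ = 2)

/-- The disjunctive domination number. -/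
noncomputable def disjDomNum {V : Type*} (G : SimpleGraph V) : ℕ :=
  sInf {n | ∃ D : Set V, IsDisjDomSet G D ∧ D.ncard = n}

/-- A leaf is a vertex of degree one. -/
def IsLeaf {V : Type*} (G : SimpleGraph V) (v : V) : Prop :=
  (G.neighborSet v).ncard = 1

/-- A support vertex is a vertex adjacent to a leaf. -/
def IsSupport {V : Type*} (G : SimpleGraph V) (v : V) : Prop :=
  ∃ u, G.Adj v u ∧ IsLeaf G u

namespace DisjAux

variable {V : Type*} {G : SimpleGraph V}

/-- In a tree, every path realizes the distance. -/
lemma path_length_eq_dist (hT : G.IsTree) {u v : V} (p : G.Walk u v) (hp : p.IsPath) :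
    p.length = G.dist u v := by
  obtain ⟨q, hq, hql⟩ := hT.isConnected.exists_path_of_dist u v
  have : p = q := (hT.existsUnique_path u v).unique hp hq
  rw [this, hql]

/-- In a tree, adjacent vertices have distances from `r` differing by exactly one. -/
lemma adj_dist (hT : G.IsTree) {r u v : V} (h : G.Adj u v) :
    G.dist r v = G.dist r u + 1 ∨ G.dist r u = G.dist r v + 1 := by
  classical
  obtain ⟨P, hP, hPl⟩ := hT.isConnected.exists_path_of_dist r u
  by_cases hv : v ∈ P.support
  · right
    have ht : (P.takeUntil v hv).length = G.dist r v :=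
      path_length_eq_dist hT _ (hP.takeUntil hv)
    have hd : (P.dropUntil v hv).length = G.dist v u :=
      path_length_eq_dist hT _ (hP.dropUntil hv)
    have hvu : G.dist v u = 1 := dist_eq_one_iff_adj.mpr h.symm
    have hsum : (P.takeUntil v hv).length + (P.dropUntil v hv).length = P.length := by
      have h5 := P.take_spec hv
      conv_rhs => rw [← h5]
      rw [Walk.length_append]
    omega
  · left
    have hW : (Walk.cons h.symm P.reverse).IsPath := by
      rw [Walk.cons_isPath_iff]
      refine ⟨hP.reverse, ?_⟩
      rw [Walk.support_reverse, List.mem_reverse]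
      exact hv
    have h6 := path_length_eq_dist hT _ hW
    simp only [Walk.length_cons, Walk.length_reverse] at h6
    rw [show G.dist r v = G.dist v r from SimpleGraph.dist_comm, ← h6, hPl]

/-- In a tree, every vertex other than `r` has a "parent". -/
lemma exists_parent (hT : G.IsTree) {r v : V} (h : v ≠ r) :
    ∃ p, G.Adj v p ∧ G.dist r p + 1 = G.dist r v := by
  obtain ⟨q, hq, hql⟩ := hT.isConnected.exists_path_of_dist v r
  cases q with
  | nil => exact absurd rfl h
  | cons hadj q' =>
    rename_i b
    refine ⟨b, hadj, ?_⟩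
    have h1 : q'.length = G.dist b r := path_length_eq_dist hT _ hq.of_cons
    simp only [Walk.length_cons] at hql
    rw [show G.dist r b = G.dist b r from SimpleGraph.dist_comm,
      show G.dist r v = G.dist v r from SimpleGraph.dist_comm, ← h1, ← hql]

/-- Parents are unique in a tree. -/
lemma parent_unique (hT : G.IsTree) {r v p₁ p₂ : V} (h₁ : G.Adj v p₁) (h₂ : G.Adj v p₂)
    (hd₁ : G.dist r p₁ + 1 = G.dist r v) (hd₂ : G.dist r p₂ + 1 = G.dist r v) : p₁ = p₂ := by
  classical
  have key : ∀ p : V, G.Adj v p → G.dist r p + 1 = G.dist r v →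
      ∃ W : G.Walk v r, W.IsPath ∧ W.getVert 1 = p := by
    intro p hp hd
    obtain ⟨P, hP, hPl⟩ := hT.isConnected.exists_path_of_dist r p
    have hvP : v ∉ P.support := by
      intro hv
      have h1 : G.dist r v ≤ (P.takeUntil v hv).length := dist_le _
      have h2 : (P.takeUntil v hv).length ≤ P.length := Walk.length_takeUntil_le P hv
      omega
    refine ⟨Walk.cons hp P.reverse, ?_, ?_⟩
    · rw [Walk.cons_isPath_iff]
      refine ⟨hP.reverse, ?_⟩
      rw [Walk.support_reverse, List.mem_reverse]
      exact hvP
    · rw [Walk.getVert_cons_succ, Walk.getVert_zero]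
  obtain ⟨W₁, hW₁, hg₁⟩ := key p₁ h₁ hd₁
  obtain ⟨W₂, hW₂, hg₂⟩ := key p₂ h₂ hd₂
  have : W₁ = W₂ := (hT.existsUnique_path v r).unique hW₁ hW₂
  rw [← hg₁, ← hg₂, this]

lemma leaf_unique_neighbor {v u w : V} (hl : IsLeaf G v) (hu : G.Adj v u) (hw : G.Adj v w) :
    w = u := by
  obtain ⟨a, ha⟩ := Set.ncard_eq_one.mp hl
  have h1 : u ∈ G.neighborSet v := hu
  have h2 : w ∈ G.neighborSet v := hw
  rw [ha] at h1 h2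
  rw [Set.mem_singleton_iff] at h1 h2
  exact h2.trans h1.symm

lemma not_leaf_of_two_adj {v a b : V} (ha : G.Adj v a) (hb : G.Adj v b) (hne : a ≠ b) :
    ¬IsLeaf G v := fun hl => hne (leaf_unique_neighbor hl hb ha)

lemma exists_adj [Fintype V] (hc : G.Connected) (hn : 2 ≤ Fintype.card V) (v : V) :
    ∃ u, G.Adj v u := by
  obtain ⟨w, hw⟩ := Fintype.exists_ne_of_one_lt_card (by omega) v
  obtain ⟨q, hq, hql⟩ := hc.exists_path_of_dist v w
  cases q with
  | nil => exact absurd rfl hw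
  | cons hadj q' => exact ⟨_, hadj⟩

lemma exists_two_adj [Fintype V] (hc : G.Connected) (hn : 2 ≤ Fintype.card V) {v : V}
    (hv : ¬IsLeaf G v) : ∃ a b, G.Adj v a ∧ G.Adj v b ∧ a ≠ b := by
  have h1 : (G.neighborSet v).Nonempty := by
    obtain ⟨u, hu⟩ := exists_adj hc hn v
    exact ⟨u, hu⟩
  have h2 : 1 ≤ (G.neighborSet v).ncard := by
    rw [Nat.one_le_iff_ne_zero]
    intro h
    rw [← Set.ncard_pos (G.neighborSet v).toFinite] at h1
    omega
  have h3 : 1 < (G.neighborSet v).ncard := by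
    rcases Nat.lt_or_ge 1 ((G.neighborSet v).ncard) with h | h
    · exact h
    · exact absurd (le_antisymm h h2) hv
  obtain ⟨a, ha, b, hb, hab⟩ := (Set.one_lt_ncard (G.neighborSet v).toFinite).mp h3
  exact ⟨a, b, ha, hb, hab⟩

/-- In a tree, every non-leaf vertex has a "child" (w.r.t. any root `r`). -/
lemma exists_child [Fintype V] (hT : G.IsTree) (hn : 2 ≤ Fintype.card V) {r v : V}
    (hv : ¬IsLeaf G v) : ∃ w, G.Adj v w ∧ G.dist r w = G.dist r v + 1 := by
  obtain ⟨a, b, ha, hb, hab⟩ := exists_two_adj hT.isConnected hn hv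
  rcases adj_dist hT (r := r) ha with h1 | h1
  · exact ⟨a, ha, h1⟩
  · rcases adj_dist hT (r := r) hb with h2 | h2
    · exact ⟨b, hb, h2⟩
    · exact absurd (parent_unique hT (r := r) ha hb (by omega) (by omega)) hab

lemma exists_support [Fintype V] [Nonempty V] (hT : G.IsTree) (hn : 2 ≤ Fintype.card V) :
    ∃ r, IsSupport G r := by
  classical
  obtain ⟨v₀⟩ := (inferInstance : Nonempty V)
  obtain ⟨v, _, hmax⟩ := Finset.exists_max_image Finset.univ (fun w => G.dist v₀ w)
    ⟨v₀, Finset.mem_univ v₀⟩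
  obtain ⟨w₀, hw₀⟩ := Fintype.exists_ne_of_one_lt_card (by omega) v₀
  have hvne : v ≠ v₀ := by
    intro h
    have h1 : 0 < G.dist v₀ w₀ :=
      hT.isConnected.pos_dist_of_ne (fun he => hw₀ he.symm)
    have h2 := hmax w₀ (Finset.mem_univ w₀)
    rw [h] at h2
    rw [SimpleGraph.dist_self] at h2
    omega
  obtain ⟨u, hu⟩ := exists_adj hT.isConnected hn v
  have hpar : ∀ w, G.Adj v w → G.dist v₀ w + 1 = G.dist v₀ v := by
    intro w hw
    rcases adj_dist hT (r := v₀) hw with h | h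
    · have := hmax w (Finset.mem_univ w)
      omega
    · omega
  have huniq : ∀ w, G.Adj v w → w = u := by
    intro w hw
    exact parent_unique hT (r := v₀) hw hu (hpar w hw) (hpar u hu)
  have hleaf : IsLeaf G v := by
    have : G.neighborSet v = {u} := by
      ext x
      simp only [mem_neighborSet, Set.mem_singleton_iff]
      exact ⟨fun h => huniq x h, fun h => h ▸ hu⟩
    rw [IsLeaf, this, Set.ncard_singleton]
  exact ⟨u, v, hu.symm, hleaf⟩

lemma dist_two (hc : G.Connected) {r v p x : V} (h1 : G.Adj v p) (h2 : G.Adj p x)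
    (hd : G.dist r x + 2 ≤ G.dist r v ∨ G.dist r v + 2 ≤ G.dist r x) : G.dist v x = 2 := by
  have hle : G.dist v x ≤ 2 := by
    have := dist_le (Walk.cons h1 (Walk.cons h2 Walk.nil))
    simpa using this
  have t1 : G.dist r v ≤ G.dist r x + G.dist x v := hc.dist_triangle
  have t2 : G.dist r x ≤ G.dist r v + G.dist v x := hc.dist_triangle
  rw [show G.dist x v = G.dist v x from SimpleGraph.dist_comm] at t1
  omega

/-- The key construction: supports together with non-leaves at distance `≡ c (mod 4)`
from a support root form a disjunctive dominating set. -/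
lemma key [Fintype V] (hT : G.IsTree) (hn : 2 ≤ Fintype.card V) {r : V} (hr : IsSupport G r)
    (c : ℕ) :
    IsDisjDomSet G ({v | IsSupport G v} ∪ {v | ¬IsLeaf G v ∧ G.dist r v % 4 = c % 4}) := by
  intro v hv
  set D : Set V := {v | IsSupport G v} ∪ {v | ¬IsLeaf G v ∧ G.dist r v % 4 = c % 4} with hD
  have hrD : r ∈ D := Or.inl hr
  have hvS : ¬IsSupport G v := fun h => hv (Or.inl h)
  have hvr : v ≠ r := fun h => hv (h ▸ hrD)
  by_cases hleaf : IsLeaf G v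
  · -- leaf: its parent is a support
    obtain ⟨p, hp, _⟩ := exists_parent hT hvr
    exact Or.inl ⟨p, Or.inl ⟨v, hp.symm, hleaf⟩, hp⟩
  · have hvD₀ : G.dist r v % 4 ≠ c % 4 := fun h => hv (Or.inr ⟨hleaf, h⟩)
    have hd1 : 0 < G.dist r v := hT.isConnected.pos_dist_of_ne (fun h => hvr h.symm)
    by_cases hd1' : G.dist r v = 1
    · -- adjacent to the root
      have : G.Adj r v := dist_eq_one_iff_adj.mp hd1'
      exact Or.inl ⟨r, hrD, this.symm⟩
    · have hd2 : 2 ≤ G.dist r v := by omega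
      have hmod : G.dist r v % 4 = (c + 1) % 4 ∨ G.dist r v % 4 = (c + 2) % 4 ∨
          G.dist r v % 4 = (c + 3) % 4 := by omega
      obtain ⟨p, hpv, hpd⟩ := exists_parent hT hvr
      have hpr : p ≠ r := by
        intro h
        subst h
        rw [SimpleGraph.dist_self] at hpd
        omega
      rcases hmod with hm | hm | hm
      · -- depth ≡ c+1 : the parent is in D
        obtain ⟨g, hpg, hgd⟩ := exists_parent hT hpr
        have hpleaf : ¬IsLeaf G p := by
          refine not_leaf_of_two_adj hpv.symm hpg ?_
          intro h
          rw [← h] at hgd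
          omega
        refine Or.inl ⟨p, Or.inr ⟨hpleaf, by omega⟩, hpv⟩
      · -- depth ≡ c+2 : grandparent and a grandchild
        by_cases hnb : ∃ u ∈ D, G.Adj v u
        · exact Or.inl hnb
        · push_neg at hnb
          have hpD : p ∉ D := fun h => hnb p h hpv
          have hpS : ¬IsSupport G p := fun h => hpD (Or.inl h)
          obtain ⟨g, hpg, hgd⟩ := exists_parent hT hpr
          have hgD : g ∈ D := by
            by_cases hgr : g = r
            · rw [hgr]; exact hrD
            · obtain ⟨g', hgg', hg'd⟩ := exists_parent hT hgr
              have hgr1 : 0 < G.dist r g :=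
                hT.isConnected.pos_dist_of_ne (fun h => hgr h.symm)
              have hgleaf : ¬IsLeaf G g := by
                refine not_leaf_of_two_adj hpg.symm hgg' ?_
                intro h
                rw [← h] at hg'd
                omega
              exact Or.inr ⟨hgleaf, by omega⟩
          have hvg : G.dist v g = 2 :=
            dist_two hT.isConnected (r := r) hpv hpg (by omega)
          obtain ⟨w, hvw, hwd⟩ := exists_child hT hn (r := r) hleaf
          have hwD : w ∉ D := fun h => hnb w h hvw
          have hwS : ¬IsSupport G w := fun h => hwD (Or.inl h)
          have hwleaf : ¬IsLeaf G w := fun h => hvS ⟨w, hvw, h⟩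
          obtain ⟨x, hwx, hxd⟩ := exists_child hT hn (r := r) hwleaf
          have hxleaf : ¬IsLeaf G x := fun h => hwS ⟨x, hwx, h⟩
          have hxD : x ∈ D := Or.inr ⟨hxleaf, by omega⟩
          have hvx : G.dist v x = 2 :=
            dist_two hT.isConnected (r := r) hvw hwx (by omega)
          have hgx : g ≠ x := by
            intro h
            rw [h] at hgd
            omega
          exact Or.inr ⟨g, hgD, x, hxD, hgx, hvg, hvx⟩
      · -- depth ≡ c+3 : a child is in D
        obtain ⟨w, hvw, hwd⟩ := exists_child hT hn (r := r) hleaf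
        have hwleaf : ¬IsLeaf G w := fun h => hvS ⟨w, hvw, h⟩
        exact Or.inl ⟨w, Or.inr ⟨hwleaf, by omega⟩, hvw⟩

lemma leaf_not_support [Fintype V] (hT : G.IsTree) (h3 : 3 ≤ Fintype.card V) {v : V}
    (hl : IsLeaf G v) : ¬IsSupport G v := by
  classical
  rintro ⟨u, hvu, hu⟩
  have hvu' : v ≠ u := hvu.ne
  obtain ⟨w, hwv, hwu⟩ : ∃ w, w ≠ v ∧ w ≠ u := by
    by_contra h
    push_neg at h
    have hsub : (Finset.univ : Finset V) ⊆ {v, u} := by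
      intro x _
      by_cases hx : x = v
      · simp [hx]
      · simp [h x hx]
    have hc1 := Finset.card_le_card hsub
    have hc2 : ({v, u} : Finset V).card ≤ 2 :=
      (Finset.card_insert_le v {u}).trans (by simp)
    rw [Finset.card_univ] at hc1
    omega
  obtain ⟨q, hq, hql⟩ := hT.isConnected.exists_path_of_dist v w
  cases q with
  | nil => exact hwv rfl
  | cons h1 q1 =>
    rename_i a
    have ha : a = u := leaf_unique_neighbor hl hvu h1
    subst ha
    cases q1 with
    | nil => exact hwu rfl
    | cons h2 q2 =>
      rename_i b
      have hb : b = v := leaf_unique_neighbor hu hvu.symm h2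
      subst hb
      rw [Walk.cons_isPath_iff] at hq
      exact hq.2 (by rw [Walk.support_cons]; exact List.mem_cons_of_mem _ q2.start_mem_support)

end DisjAux

theorem disjDomNum_upper_bound' {V : Type*} [Fintype V] (G : SimpleGraph V)
    (hT : G.IsTree) (hn : 2 ≤ Fintype.card V) :
    (disjDomNum G : ℚ) ≤
      ((Fintype.card V : ℚ) + 3 * ({v | IsSupport G v}.ncard : ℚ) - ({v | IsLeaf G v}.ncard : ℚ)) / 4 := by
  classical
  haveI hne : Nonempty V := Fintype.card_pos_iff.mp (by omega)
  set S : Set V := {v | IsSupport G v} with hS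
  set L : Set V := {v | IsLeaf G v} with hL
  rcases eq_or_lt_of_le hn with h2 | h3
  · -- the two-vertex case
    obtain ⟨u, w, huw, huniv⟩ := (Nat.card_eq_two_iff (α := V)).mp
      (by rw [Nat.card_eq_fintype_card]; omega)
    have hall : ∀ x : V, x = u ∨ x = w := by
      intro x
      have : x ∈ ({u, w} : Set V) := by rw [huniv]; trivial
      simpa using this
    have hadj : G.Adj u w := by
      obtain ⟨q, hq, hql⟩ := hT.isConnected.exists_path_of_dist u w
      cases q with
      | nil => exact absurd rfl huw
      | cons h1 q1 =>
        rename_i a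
        rcases hall a with h | h
        · rw [h] at h1; exact absurd rfl h1.ne
        · rw [h] at h1; exact h1
    have hleafu : IsLeaf G u := by
      have hns : G.neighborSet u = {w} := by
        ext x
        simp only [mem_neighborSet, Set.mem_singleton_iff]
        constructor
        · intro hx
          rcases hall x with h | h
          · rw [h] at hx; exact absurd rfl hx.ne
          · exact h
        · intro h; rw [h]; exact hadj
      rw [IsLeaf, hns, Set.ncard_singleton]
    have hleafw : IsLeaf G w := by
      have hns : G.neighborSet w = {u} := by
        ext x
        simp only [mem_neighborSet, Set.mem_singleton_iff]
        constructor
        · intro hx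
          rcases hall x with h | h
          · exact h
          · rw [h] at hx; exact absurd rfl hx.ne
        · intro h; rw [h]; exact hadj.symm
      rw [IsLeaf, hns, Set.ncard_singleton]
    have hLuniv : L = Set.univ := by
      ext x
      simp only [hL, Set.mem_setOf_eq, Set.mem_univ, iff_true]
      rcases hall x with h | h
      · rw [h]; exact hleafu
      · rw [h]; exact hleafw
    have hSuniv : S = Set.univ := by
      ext x
      simp only [hS, Set.mem_setOf_eq, Set.mem_univ, iff_true]
      rcases hall x with h | h
      · rw [h]; exact ⟨w, hadj, hleafw⟩
      · rw [h]; exact ⟨u, hadj.symm, hleafu⟩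
    have hLcard : L.ncard = 2 := by
      rw [hLuniv, Set.ncard_univ, Nat.card_eq_fintype_card]; omega
    have hScard : S.ncard = 2 := by
      rw [hSuniv, Set.ncard_univ, Nat.card_eq_fintype_card]; omega
    have hdom : IsDisjDomSet G {u} := by
      intro x hx
      have hxw : x = w := by
        rcases hall x with h | h
        · exact absurd (Set.mem_singleton_iff.mpr h) hx
        · exact h
      refine Or.inl ⟨u, rfl, ?_⟩
      rw [hxw]
      exact hadj.symm
    have hγ : disjDomNum G ≤ 1 :=
      Nat.sInf_le ⟨{u}, hdom, Set.ncard_singleton u⟩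
    rw [hLcard, hScard, ← h2]
    have hQ : (disjDomNum G : ℚ) ≤ 1 := by exact_mod_cast hγ
    linarith
  · -- the main case: at least three vertices
    obtain ⟨r, hr⟩ := DisjAux.exists_support hT hn
    set M : Set V := {v | ¬IsLeaf G v ∧ ¬IsSupport G v} with hM
    have hLS : Disjoint L S := by
      rw [Set.disjoint_left]
      intro v hv hvS
      exact DisjAux.leaf_not_support hT h3 hv hvS
    have hLSM : Disjoint (L ∪ S) M := by
      rw [Set.disjoint_left]
      rintro v (hv | hv) ⟨hv1, hv2⟩
      · exact hv1 hv
      · exact hv2 hv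
    have huniv : L ∪ S ∪ M = Set.univ := by
      ext v
      simp only [Set.mem_union, hL, hS, hM, Set.mem_setOf_eq, Set.mem_univ, iff_true]
      by_cases h1 : IsLeaf G v
      · exact Or.inl (Or.inl h1)
      · by_cases hsup : IsSupport G v
        · exact Or.inl (Or.inr hsup)
        · exact Or.inr ⟨h1, hsup⟩
    have hcardsum : Fintype.card V = L.ncard + S.ncard + M.ncard := by
      have h1 : (L ∪ S ∪ M).ncard = (L ∪ S).ncard + M.ncard :=
        Set.ncard_union_eq hLSM (L ∪ S).toFinite M.toFinite
      have hu2 : (L ∪ S).ncard = L.ncard + S.ncard :=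
        Set.ncard_union_eq hLS L.toFinite S.toFinite
      rw [huniv] at h1
      rw [Set.ncard_univ, Nat.card_eq_fintype_card] at h1
      omega
    have hMfin : M.Finite := M.toFinite
    have hfib : ∑ c ∈ Finset.range 4,
        (hMfin.toFinset.filter (fun v => G.dist r v % 4 = c)).card = hMfin.toFinset.card := by
      rw [← Finset.card_eq_sum_card_fiberwise]
      intro x _
      simp only [Finset.mem_coe, Finset.mem_range]
      omega
    obtain ⟨c, hc4, hcb⟩ : ∃ c < 4,
        4 * (hMfin.toFinset.filter (fun v => G.dist r v % 4 = c)).card ≤ hMfin.toFinset.card := by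
      by_contra h
      push_neg at h
      have hlt : ∀ c ∈ Finset.range 4, hMfin.toFinset.card <
          4 * (hMfin.toFinset.filter (fun v => G.dist r v % 4 = c)).card := by
        intro c hc
        exact h c (Finset.mem_range.mp hc)
      have hss := Finset.sum_lt_sum_of_nonempty ⟨0, by simp⟩ hlt
      rw [← Finset.mul_sum, hfib, Finset.sum_const, Finset.card_range, smul_eq_mul] at hss
      omega
    set Mc : Set V := {v | (¬IsLeaf G v ∧ ¬IsSupport G v) ∧ G.dist r v % 4 = c} with hMc
    have hMcfin : Mc.Finite := Mc.toFinite
    have hMccard : Mc.ncard = (hMfin.toFinset.filter (fun v => G.dist r v % 4 = c)).card := by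
      rw [Set.ncard_eq_toFinset_card _ hMcfin]
      congr 1
      ext v
      simp only [Set.Finite.mem_toFinset, Finset.mem_filter, hMc, hM, Set.mem_setOf_eq]
    have hMcM : 4 * Mc.ncard ≤ M.ncard := by
      rw [hMccard, Set.ncard_eq_toFinset_card _ hMfin]
      exact hcb
    set D : Set V := {v | IsSupport G v} ∪ {v | ¬IsLeaf G v ∧ G.dist r v % 4 = c % 4} with hD
    have hdom : IsDisjDomSet G D := DisjAux.key hT hn hr c
    have hsub : D ⊆ S ∪ Mc := by
      rintro v (hv | ⟨hv1, hv2⟩)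
      · exact Or.inl hv
      · by_cases hvS : IsSupport G v
        · exact Or.inl hvS
        · exact Or.inr ⟨⟨hv1, hvS⟩, by rwa [Nat.mod_eq_of_lt hc4] at hv2⟩
    have hDcard : D.ncard ≤ S.ncard + Mc.ncard := by
      calc D.ncard ≤ (S ∪ Mc).ncard := Set.ncard_le_ncard hsub (S ∪ Mc).toFinite
        _ ≤ S.ncard + Mc.ncard := Set.ncard_union_le S Mc
    have hγ : disjDomNum G ≤ S.ncard + Mc.ncard :=
      le_trans (Nat.sInf_le ⟨D, hdom, rfl⟩) hDcard
    have hkey : 4 * disjDomNum G + L.ncard ≤ Fintype.card V + 3 * S.ncard := by omega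
    rw [le_div_iff₀ (by norm_num : (0 : ℚ) < 4)]
    have hQ : ((4 * disjDomNum G + L.ncard : ℕ) : ℚ) ≤
        ((Fintype.card V + 3 * S.ncard : ℕ) : ℚ) := by exact_mod_cast hkey
    push_cast at hQ
    linarith
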